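/- Let 0 < α < 1 and let f : ℝ → ℝ be continuously differentiable on [a,b]. Then for every t ∈ [a,b], the Atangana–Baleanu fractional integral of the Atangana–Baleanu fractional derivative of f recovers f up to the initial value: I_*^α(D_*^α f)(t) = f(t) − f(a). -/

import Mathlib

open Set

/-- Two-parameter Mittag-Leffler function `E_{α,β}(z) = ∑ₖ zᵏ / Γ(αk + β)`. -/
noncomputable def mittagLeffler (α β z : ℝ) : ℝ :=
  ∑' k : ℕ, z ^ k / Real.Gamma (α * k + β)

/-- Atangana–Baleanu fractional derivative of order `α` with base point `a`
(normalization `M(α) = 1`). -/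
noncomputable def abDeriv (α a : ℝ) (f : ℝ → ℝ) (t : ℝ) : ℝ :=
  (1 / (1 - α)) * ∫ s in a..t, deriv f s *
    mittagLeffler α 1 (-α * (t - s) ^ α / (1 - α))

/-- Riemann–Liouville fractional integral of order `α` with base point `a`. -/
noncomputable def rlInt (α a : ℝ) (f : ℝ → ℝ) (t : ℝ) : ℝ :=
  (1 / Real.Gamma α) * ∫ s in a..t, (t - s) ^ (α - 1) * f s

/-- Atangana–Baleanu fractional integral of order `α` with base point `a`
(normalization `M(α) = 1`). -/
noncomputable def abInt (α a : ℝ) (f : ℝ → ℝ) (t : ℝ) : ℝ :=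
  (1 - α) * f t + α * rlInt α a f t

open MeasureTheory Filter Topology intervalIntegral

lemma gamma_ratio_le {α : ℝ} (hα0 : 0 < α) (hα1 : α < 1) {y : ℝ} (hy : 0 < y) :
    y * Real.Gamma y ≤ Real.Gamma (y + α) * (y + α) ^ (1 - α) := by
  have hyα : 0 < y + α := by linarith
  have h1 : Real.Gamma (y + 1) ≤ Real.Gamma (y + α) ^ α * Real.Gamma (y + α + 1) ^ (1 - α) := by
    have := Real.Gamma_mul_add_mul_le_rpow_Gamma_mul_rpow_Gamma
      (s := y + α) (t := y + α + 1) (a := α) (b := 1 - α) (by linarith) (by linarith)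
      hα0 (by linarith) (by ring)
    convert this using 2
    ring
  have h2 : Real.Gamma (y + α + 1) = (y + α) * Real.Gamma (y + α) :=
    Real.Gamma_add_one hyα.ne'
  have hΓ : 0 < Real.Gamma (y + α) := Real.Gamma_pos_of_pos hyα
  calc y * Real.Gamma y = Real.Gamma (y + 1) := (Real.Gamma_add_one hy.ne').symm
    _ ≤ Real.Gamma (y + α) ^ α * ((y + α) * Real.Gamma (y + α)) ^ (1 - α) := by rw [← h2]; exact h1
    _ = Real.Gamma (y + α) * (y + α) ^ (1 - α) := by
        rw [Real.mul_rpow hyα.le hΓ.le, ← mul_assoc, mul_comm (Real.Gamma (y+α) ^ α),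
          mul_assoc, ← Real.rpow_add hΓ]
        norm_num [mul_comm]

lemma summable_ml {α : ℝ} (hα0 : 0 < α) (hα1 : α < 1) (x : ℝ) :
    Summable (fun k : ℕ => x ^ k / Real.Gamma (α * k + 1)) := by
  apply summable_of_ratio_norm_eventually_le (r := 1/2) (by norm_num)
  have htend : Tendsto (fun k : ℕ => |x| * 2 ^ (1 - α) * (α * k + 1) ^ (-α)) atTop (𝓝 0) := by
    have h1 : Tendsto (fun k : ℕ => (α * k + 1 : ℝ)) atTop atTop := by
      apply tendsto_atTop_add_const_right
      exact (tendsto_natCast_atTop_atTop (R := ℝ)).const_mul_atTop hα0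
    have h2 : Tendsto (fun y : ℝ => y ^ (-α)) atTop (𝓝 0) := tendsto_rpow_neg_atTop hα0
    have := (h2.comp h1).const_mul (|x| * 2 ^ (1 - α))
    simpa using this
  filter_upwards [htend.eventually_lt_const (by norm_num : (0:ℝ) < 1/2)] with k hk
  set y : ℝ := α * k + 1 with hy
  have hαk : 0 ≤ α * k := by positivity
  have hy0 : 0 < y := by positivity
  have hyα : 0 < y + α := by linarith
  have hkey : α * (k + 1 : ℕ) + 1 = y + α := by push_cast; ring
  have hΓ1 : 0 < Real.Gamma y := Real.Gamma_pos_of_pos hy0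
  have hΓ2 : 0 < Real.Gamma (y + α) := Real.Gamma_pos_of_pos hyα
  rw [hkey, Real.norm_eq_abs, Real.norm_eq_abs, abs_div, abs_div, abs_pow, abs_pow,
    abs_of_pos hΓ1, abs_of_pos hΓ2, mul_div_assoc', div_le_div_iff₀ hΓ2 hΓ1]
  have hb1 : (y + α) ^ (1 - α) ≤ 2 ^ (1 - α) * y ^ (1 - α) := by
    rw [← Real.mul_rpow (by norm_num) hy0.le]
    apply Real.rpow_le_rpow hyα.le (by linarith) (by linarith)
  have hb2 : y ^ (1 - α) = y * y ^ (-α) := by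
    rw [show (1:ℝ) - α = 1 + (-α) by ring, Real.rpow_add hy0, Real.rpow_one]
  have hchain : |x| * ((y + α) ^ (1 - α)) ≤ (1/2) * y := by
    calc |x| * ((y + α) ^ (1 - α)) ≤ |x| * (2 ^ (1 - α) * (y * y ^ (-α))) := by
          rw [← hb2]; exact mul_le_mul_of_nonneg_left hb1 (abs_nonneg x)
      _ = (|x| * 2 ^ (1 - α) * y ^ (-α)) * y := by ring
      _ ≤ (1/2) * y := mul_le_mul_of_nonneg_right hk.le hy0.le
  have hA := mul_le_mul_of_nonneg_left (gamma_ratio_le hα0 hα1 hy0) (abs_nonneg x)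
  have hB := mul_le_mul_of_nonneg_left hchain hΓ2.le
  have hgoal : |x| * Real.Gamma y ≤ 1/2 * Real.Gamma (y + α) := by
    rw [← mul_le_mul_iff_of_pos_right hy0]
    calc |x| * Real.Gamma y * y = |x| * (y * Real.Gamma y) := by ring
      _ ≤ |x| * (Real.Gamma (y+α) * (y+α)^(1-α)) := hA
      _ = Real.Gamma (y+α) * (|x| * (y+α)^(1-α)) := by ring
      _ ≤ Real.Gamma (y+α) * (1/2*y) := hB
      _ = 1/2 * Real.Gamma (y+α) * y := by ring
  calc |x| ^ (k+1) * Real.Gamma y = |x| ^ k * (|x| * Real.Gamma y) := by ring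
    _ ≤ |x| ^ k * (1/2 * Real.Gamma (y + α)) :=
        mul_le_mul_of_nonneg_left hgoal (pow_nonneg (abs_nonneg x) k)
    _ = 1/2 * |x| ^ k * Real.Gamma (y + α) := by ring

lemma continuous_ml {α : ℝ} (hα0 : 0 < α) (hα1 : α < 1) :
    Continuous (mittagLeffler α 1) := by
  rw [continuous_iff_continuousAt]
  intro x₀
  set R : ℝ := |x₀| + 1 with hR
  have hR0 : 0 < R := by positivity
  have hclamp : Continuous (fun x : ℝ => max (-R) (min x R)) :=
    continuous_const.max (continuous_id.min continuous_const)
  have hcc : Continuous (fun x : ℝ => mittagLeffler α 1 (max (-R) (min x R))) := by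
    unfold mittagLeffler
    apply continuous_tsum
      (u := fun k : ℕ => R ^ k / Real.Gamma (α * k + 1))
    · intro k
      exact (hclamp.pow k).div_const _
    · exact summable_ml hα0 hα1 R
    · intro k x
      have hΓ : 0 < Real.Gamma (α * k + 1) := Real.Gamma_pos_of_pos (by positivity)
      have habs : |max (-R) (min x R)| ≤ R := by
        rw [abs_le]
        constructor
        · exact le_max_left _ _
        · exact max_le (by linarith) (min_le_right _ _)
      rw [Real.norm_eq_abs, abs_div, abs_pow, abs_of_pos hΓ]
      gcongr
  apply hcc.continuousAt.congr
  apply Filter.eventuallyEq_of_mem (Icc_mem_nhds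
    (show -R < x₀ by rw [hR]; cases abs_cases x₀ with
      | inl h => cases h; linarith | inr h => cases h; linarith)
    (show x₀ < R by rw [hR]; cases abs_cases x₀ with
      | inl h => cases h; linarith | inr h => cases h; linarith))
  intro x hx
  have : max (-R) (min x R) = x := by
    rw [min_eq_left hx.2, max_eq_right hx.1]
  simp only [this]

lemma beta_real {p q x : ℝ} (hp : 0 < p) (hq : 0 < q) (hx : 0 < x) :
    ∫ s in (0:ℝ)..x, s ^ (p - 1) * (x - s) ^ (q - 1) =
      Real.Gamma p * Real.Gamma q / Real.Gamma (p + q) * x ^ (p + q - 1) := by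
  have hpc : 0 < (p : ℂ).re := by simpa using hp
  have hqc : 0 < (q : ℂ).re := by simpa using hq
  have h1 := Complex.Gamma_mul_Gamma_eq_betaIntegral hpc hqc
  have h2 := Complex.betaIntegral_scaled (p : ℂ) (q : ℂ) hx
  have hΓpq : (Complex.Gamma ((p : ℂ) + q)) ≠ 0 := by
    rw [show ((p : ℂ) + q) = ((p + q : ℝ) : ℂ) by push_cast; ring, Complex.Gamma_ofReal]
    exact_mod_cast (Real.Gamma_pos_of_pos (by linarith)).ne'
  have hbeta : Complex.betaIntegral p q = Complex.Gamma p * Complex.Gamma q / Complex.Gamma (p + q) := by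
    field_simp [h1]
    rw [h1]; ring
  rw [hbeta] at h2
  -- h2 : ∫ s in 0..x, (s:ℂ)^(p-1) * ((x:ℂ)-s)^(q-1) = x^(p+q-1) * (Γp Γq / Γ(p+q))
  have hre : (∫ s in (0:ℝ)..x, ((s ^ (p - 1) * (x - s) ^ (q - 1) : ℝ) : ℂ)) =
      ∫ s in (0:ℝ)..x, (s : ℂ) ^ ((p : ℂ) - 1) * ((x : ℂ) - s) ^ ((q : ℂ) - 1) := by
    apply intervalIntegral.integral_congr
    intro s hs
    rw [uIcc_of_le hx.le] at hs
    push_cast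
    rw [Complex.ofReal_cpow hs.1, Complex.ofReal_cpow (by linarith [hs.2] : (0:ℝ) ≤ x - s)]
    push_cast
    ring
  rw [intervalIntegral.integral_ofReal] at hre
  have key : ((Real.Gamma p * Real.Gamma q / Real.Gamma (p + q) * x ^ (p + q - 1) : ℝ) : ℂ) =
      (x : ℂ) ^ ((p : ℂ) + q - 1) * (Complex.Gamma p * Complex.Gamma q / Complex.Gamma (p + q)) := by
    push_cast
    rw [Complex.ofReal_cpow hx.le]
    rw [show ((p : ℂ) + q) = ((p + q : ℝ) : ℂ) by push_cast; ring]
    rw [Complex.Gamma_ofReal, Complex.Gamma_ofReal, Complex.Gamma_ofReal]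
    push_cast
    ring
  apply Complex.ofReal_inj.1
  rw [hre, h2]
  exact key.symm

lemma rpow_nat_mul {x : ℝ} (hx : 0 ≤ x) (α : ℝ) (k : ℕ) : x ^ (α * k) = (x ^ α) ^ k := by
  rw [← Real.rpow_natCast (x ^ α) k, ← Real.rpow_mul hx]

lemma ml_eq {α : ℝ} {x : ℝ} (hx : 0 ≤ x) :
    mittagLeffler α 1 (-α * x ^ α / (1 - α)) =
      ∑' k : ℕ, (-(α / (1 - α))) ^ k * x ^ (α * k) / Real.Gamma (α * k + 1) := by
  unfold mittagLeffler
  congr 1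
  funext k
  rw [show -α * x ^ α / (1 - α) = (-(α / (1 - α))) * x ^ α by ring, mul_pow,
    rpow_nat_mul hx]

lemma kernel_int {α : ℝ} (hα0 : 0 < α) (hα1 : α < 1) {x : ℝ} (hx : 0 < x) :
    ∫ s in (0:ℝ)..x, (x - s) ^ (α - 1) * mittagLeffler α 1 (-α * s ^ α / (1 - α)) =
      Real.Gamma α * (1 - α) / α * (1 - mittagLeffler α 1 (-α * x ^ α / (1 - α))) := by
  have h1α : (0:ℝ) < 1 - α := by linarith
  set l : ℝ := α / (1 - α) with hl
  have hl0 : 0 < l := div_pos hα0 h1α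
  set F : ℕ → ℝ → ℝ := fun k w =>
    (-l) ^ k / Real.Gamma (α * k + 1) * (w ^ (α * k) * (x - w) ^ (α - 1)) with hF
  have hΓ : ∀ k : ℕ, 0 < Real.Gamma (α * k + 1) :=
    fun k => Real.Gamma_pos_of_pos (by positivity)
  have hΓα : 0 < Real.Gamma α := Real.Gamma_pos_of_pos hα0
  -- integrability of the singular factor
  have h_rpow : IntegrableOn (fun w => (x - w) ^ (α - 1)) (Ioc 0 x) := by
    have h0 : IntervalIntegrable (fun y : ℝ => y ^ (α - 1)) volume x 0 :=
      intervalIntegrable_rpow' (by linarith)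
    have h2 := h0.comp_sub_left x
    simp only [sub_self, sub_zero] at h2
    exact h2.1
  -- measurability of terms
  have hF_meas : ∀ k : ℕ, AEStronglyMeasurable (F k) (volume.restrict (Ioc 0 x)) := by
    intro k
    apply Measurable.aestronglyMeasurable
    fun_prop
  -- pointwise bound on Ioc
  have hF_bound : ∀ k : ℕ, ∀ w ∈ Ioc (0:ℝ) x,
      ‖F k w‖ ≤ l ^ k / Real.Gamma (α * k + 1) * (x ^ (α * k) * (x - w) ^ (α - 1)) := by
    intro k w hw
    have hw0 : 0 ≤ w := hw.1.le
    have hxw : 0 ≤ x - w := by linarith [hw.2]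
    rw [hF]
    simp only [Real.norm_eq_abs, abs_mul, abs_div, abs_pow, abs_neg,
      abs_of_pos hl0, abs_of_pos (hΓ k), abs_of_nonneg (Real.rpow_nonneg hw0 _),
      abs_of_nonneg (Real.rpow_nonneg hxw _)]
    gcongr
    exact hw.2
  -- integrability of each term
  have hF_int : ∀ k : ℕ, Integrable (F k) (volume.restrict (Ioc 0 x)) := by
    intro k
    apply Integrable.mono' (((h_rpow.const_mul (x ^ (α * (k:ℕ)))).const_mul
      (l ^ k / Real.Gamma (α * k + 1)))) (hF_meas k)
    rw [ae_restrict_iff' measurableSet_Ioc]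
    exact Filter.Eventually.of_forall (hF_bound k)
  -- the integral of the majorant
  set C : ℝ := ∫ w in Ioc (0:ℝ) x, (x - w) ^ (α - 1) with hC
  have hnorm_le : ∀ k : ℕ, (∫ w in Ioc (0:ℝ) x, ‖F k w‖) ≤
      l ^ k / Real.Gamma (α * k + 1) * (x ^ (α * k) * C) := by
    intro k
    rw [hC, ← MeasureTheory.integral_const_mul, ← MeasureTheory.integral_const_mul]
    apply MeasureTheory.integral_mono_ae (hF_int k).norm
      (((h_rpow.const_mul (x ^ (α * (k:ℕ)))).const_mul (l ^ k / Real.Gamma (α * k + 1))))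
    rw [Filter.EventuallyLE, ae_restrict_iff' measurableSet_Ioc]
    exact Filter.Eventually.of_forall (hF_bound k)
  have hsum_norm : Summable (fun k : ℕ => ∫ w in Ioc (0:ℝ) x, ‖F k w‖) := by
    apply Summable.of_nonneg_of_le
      (fun k => integral_nonneg (fun w => norm_nonneg _)) hnorm_le
    have := ((summable_ml hα0 hα1 (l * x ^ α)).mul_right C)
    apply this.congr
    intro k
    rw [mul_pow, rpow_nat_mul hx.le]
    ring
  -- term-by-term integration
  rw [intervalIntegral.integral_of_le hx.le]
  have hcongr : (∫ s in Ioc (0:ℝ) x, (x - s) ^ (α - 1) * mittagLeffler α 1 (-α * s ^ α / (1 - α)))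
      = ∫ s in Ioc (0:ℝ) x, ∑' k : ℕ, F k s := by
    apply MeasureTheory.integral_congr_ae
    filter_upwards [ae_restrict_mem measurableSet_Ioc] with s hs
    rw [ml_eq hs.1.le, ← tsum_mul_left]
    congr 1
    funext k
    rw [hF]
    ring
  rw [hcongr, ← MeasureTheory.integral_tsum_of_summable_integral_norm hF_int hsum_norm]
  -- compute each term by the Beta integral
  have hterm : ∀ k : ℕ, (∫ w in Ioc (0:ℝ) x, F k w) =
      (-l) ^ k * Real.Gamma α * x ^ (α * (k + 1)) / Real.Gamma (α * (k + 1) + 1) := by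
    intro k
    rw [hF]
    simp only []
    rw [MeasureTheory.integral_const_mul, ← intervalIntegral.integral_of_le hx.le]
    have hβ : (∫ w in (0:ℝ)..x, w ^ (α * k) * (x - w) ^ (α - 1)) =
        Real.Gamma (α * k + 1) * Real.Gamma α / Real.Gamma (α * k + 1 + α) *
          x ^ (α * k + 1 + α - 1) := by
      have := beta_real (p := α * k + 1) (q := α) (by positivity) hα0 hx
      simpa using this
    rw [hβ]
    have hΓ' : Real.Gamma (α * (k+1) + 1) = Real.Gamma (α * k + 1 + α) := by
      ring_nf
    have hx' : x ^ (α * k + 1 + α - 1) = x ^ (α * (k+1)) := by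
      congr 1
      push_cast
      ring
    rw [hΓ', hx']
    field_simp
  rw [tsum_congr hterm]
  -- final summation identity
  set g : ℕ → ℝ := fun k => (-l) ^ k * x ^ (α * k) / Real.Gamma (α * k + 1) with hg
  have hg_sum : Summable g := by
    apply ((summable_ml hα0 hα1 (-l * x ^ α))).congr
    intro k
    rw [hg]
    simp only [mul_pow, rpow_nat_mul hx.le]
  have hml : mittagLeffler α 1 (-α * x ^ α / (1 - α)) = ∑' k, g k := ml_eq hx.le
  have hzero : g 0 = 1 := by
    rw [hg]
    simp [Real.Gamma_one]
  have hshift : ∑' k : ℕ, g (k + 1) = (∑' k, g k) - 1 := by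
    rw [hg_sum.tsum_eq_zero_add, hzero]
    ring
  have hterm2 : ∀ k : ℕ, (-l) ^ k * Real.Gamma α * x ^ (α * (k + 1)) / Real.Gamma (α * (k + 1) + 1)
      = (-(Real.Gamma α * (1 - α) / α)) * g (k + 1) := by
    intro k
    rw [hg]
    simp only [pow_succ]
    have : Real.Gamma (α * (↑k + 1) + 1) = Real.Gamma (α * ↑(k + 1) + 1) := by push_cast; ring_nf
    rw [this, hl]
    field_simp
    push_cast; ring_nf
  rw [tsum_congr hterm2, tsum_mul_left, hshift, ← hml]
  ring

lemma fubini_tri {α : ℝ} (hα0 : 0 < α) (hα1 : α < 1) {a t : ℝ} (hat : a < t)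
    (φ G : ℝ → ℝ) (hφ : Continuous φ) (hG : Continuous G) :
    ∫ s in a..t, (t - s) ^ (α - 1) * ∫ u in a..s, φ u * G (s - u) =
    ∫ u in a..t, φ u * ∫ s in u..t, (t - s) ^ (α - 1) * G (s - u) := by
  set K : ℝ × ℝ → ℝ := fun p => (t - p.1) ^ (α - 1) * (φ p.2 * G (p.1 - p.2)) with hK
  set T : Set (ℝ × ℝ) := {p | a < p.2} ∩ {p | p.2 < p.1} ∩ {p | p.1 < t} with hT
  have hTmeas : MeasurableSet T :=
    ((measurableSet_lt measurable_const measurable_snd).inter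
      (measurableSet_lt measurable_snd measurable_fst)).inter
      (measurableSet_lt measurable_fst measurable_const)
  have hTmem : ∀ p : ℝ × ℝ, p ∈ T ↔ a < p.2 ∧ p.2 < p.1 ∧ p.1 < t := by
    intro p
    simp [hT, and_assoc]
  set H : ℝ × ℝ → ℝ := T.indicator K with hH
  obtain ⟨Cφ, hCφ⟩ := (isCompact_Icc (a := a) (b := t)).exists_bound_of_continuousOn
    hφ.continuousOn
  obtain ⟨CG, hCG⟩ := (isCompact_Icc (a := (0:ℝ)) (b := t - a)).exists_bound_of_continuousOn
    hG.continuousOn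
  set C : ℝ := (max Cφ 0) * (max CG 0) with hCdef
  have hC0 : 0 ≤ C := mul_nonneg (le_max_right _ _) (le_max_right _ _)
  set maj : ℝ × ℝ → ℝ := fun p =>
    ((Ioo a t).indicator (fun s => C * (t - s) ^ (α - 1)) p.1) *
    ((Ioo a t).indicator (fun _ => (1:ℝ)) p.2) with hmaj
  have h_rpow : IntegrableOn (fun s => C * (t - s) ^ (α - 1)) (Ioo a t) := by
    have h0 : IntervalIntegrable (fun y : ℝ => y ^ (α - 1)) volume (t - a) 0 :=
      intervalIntegrable_rpow' (by linarith)
    have h2 := (h0.comp_sub_left t).const_mul C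
    simp only [sub_sub_cancel, sub_zero] at h2
    exact h2.1.mono_set Ioo_subset_Ioc_self
  have hmaj_int : Integrable maj (volume.prod volume) := by
    apply Integrable.mul_prod
    · rwa [integrable_indicator_iff measurableSet_Ioo]
    · rw [integrable_indicator_iff measurableSet_Ioo]
      exact integrableOn_const measure_Ioo_lt_top.ne
  have hmaj_nonneg : ∀ p, 0 ≤ maj p := by
    intro p
    apply mul_nonneg
    · apply Set.indicator_nonneg
      intro s hs
      have : (0:ℝ) < t - s := by linarith [hs.2]
      positivity
    · apply Set.indicator_nonneg
      intro u hu
      norm_num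
  have hH_meas : AEStronglyMeasurable H (volume.prod volume) := by
    apply Measurable.aestronglyMeasurable
    apply Measurable.indicator _ hTmeas
    apply Measurable.mul
    · fun_prop
    · exact ((hφ.measurable.comp measurable_snd).mul
        (hG.measurable.comp (measurable_fst.sub measurable_snd)))
  have hH_le : ∀ p, ‖H p‖ ≤ maj p := by
    intro p
    by_cases hp : p ∈ T
    · obtain ⟨h1, h2, h3⟩ := (hTmem p).1 hp
      have hts : 0 < t - p.1 := by linarith
      have hp1 : p.1 ∈ Ioo a t := ⟨lt_trans h1 h2, h3⟩
      have hp2 : p.2 ∈ Ioo a t := ⟨h1, lt_trans h2 h3⟩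
      simp only [hH, hmaj, hK]
      rw [Set.indicator_of_mem hp, Set.indicator_of_mem hp1, Set.indicator_of_mem hp2, mul_one]
      simp only [Real.norm_eq_abs, abs_mul]
      rw [abs_of_pos (Real.rpow_pos_of_pos hts _), mul_comm C]
      apply mul_le_mul_of_nonneg_left _ (Real.rpow_nonneg hts.le _)
      have e1 : |φ p.2| ≤ max Cφ 0 :=
        le_trans (by simpa using hCφ p.2 ⟨h1.le, (lt_trans h2 h3).le⟩) (le_max_left _ _)
      have e2 : |G (p.1 - p.2)| ≤ max CG 0 :=
        le_trans (by simpa using hCG (p.1 - p.2) ⟨by linarith, by linarith⟩) (le_max_left _ _)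
      rw [hCdef]
      exact mul_le_mul e1 e2 (abs_nonneg _) (le_max_right _ _)
    · simp only [hH]
      rw [Set.indicator_of_notMem hp]
      simpa using hmaj_nonneg p
  have hH_int : Integrable H (volume.prod volume) :=
    Integrable.mono' hmaj_int hH_meas (Filter.Eventually.of_forall hH_le)
  have hswap : ∫ s, ∫ u, H (s, u) = ∫ u, ∫ s, H (s, u) :=
    MeasureTheory.integral_integral_swap (f := fun s u => H (s, u)) hH_int
  have h_inner1 : ∀ s, (∫ u, H (s, u)) =
      (Ioo a t).indicator (fun s => (t - s) ^ (α - 1) * ∫ u in a..s, φ u * G (s - u)) s := by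
    intro s
    by_cases hs : s ∈ Ioo a t
    · rw [Set.indicator_of_mem hs]
      have hfun : (fun u => H (s, u)) =
          (Ioo a s).indicator (fun u => (t - s) ^ (α - 1) * (φ u * G (s - u))) := by
        funext u
        by_cases hu : u ∈ Ioo a s
        · simp only [hH]
          rw [Set.indicator_of_mem hu,
            Set.indicator_of_mem ((hTmem (s, u)).2 ⟨hu.1, hu.2, hs.2⟩)]
        · simp only [hH]
          rw [Set.indicator_of_notMem hu, Set.indicator_of_notMem]
          intro hmem
          obtain ⟨h1, h2, _⟩ := (hTmem (s, u)).1 hmem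
          exact hu ⟨h1, h2⟩
      rw [hfun, MeasureTheory.integral_indicator measurableSet_Ioo,
        ← MeasureTheory.integral_Ioc_eq_integral_Ioo,
        ← intervalIntegral.integral_of_le hs.1.le,
        ← intervalIntegral.integral_const_mul]
    · rw [Set.indicator_of_notMem hs]
      have hfun : (fun u => H (s, u)) = fun _ => (0:ℝ) := by
        funext u
        simp only [hH]
        rw [Set.indicator_of_notMem]
        intro hmem
        obtain ⟨h1, h2, h3⟩ := (hTmem (s, u)).1 hmem
        exact hs ⟨lt_trans h1 h2, h3⟩
      rw [hfun, MeasureTheory.integral_zero]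
  have h_inner2 : ∀ u, (∫ s, H (s, u)) =
      (Ioo a t).indicator (fun u => φ u * ∫ s in u..t, (t - s) ^ (α - 1) * G (s - u)) u := by
    intro u
    by_cases hu : u ∈ Ioo a t
    · rw [Set.indicator_of_mem hu]
      have hfun : (fun s => H (s, u)) =
          (Ioo u t).indicator (fun s => φ u * ((t - s) ^ (α - 1) * G (s - u))) := by
        funext s
        by_cases hs : s ∈ Ioo u t
        · simp only [hH]
          rw [Set.indicator_of_mem hs,
            Set.indicator_of_mem ((hTmem (s, u)).2 ⟨hu.1, hs.1, hs.2⟩)]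
          simp only [hK]
          ring
        · simp only [hH]
          rw [Set.indicator_of_notMem hs, Set.indicator_of_notMem]
          intro hmem
          obtain ⟨_, h2, h3⟩ := (hTmem (s, u)).1 hmem
          exact hs ⟨h2, h3⟩
      rw [hfun, MeasureTheory.integral_indicator measurableSet_Ioo,
        ← MeasureTheory.integral_Ioc_eq_integral_Ioo,
        ← intervalIntegral.integral_of_le hu.2.le,
        ← intervalIntegral.integral_const_mul]
    · rw [Set.indicator_of_notMem hu]
      have hfun : (fun s => H (s, u)) = fun _ => (0:ℝ) := by
        funext s
        simp only [hH]
        rw [Set.indicator_of_notMem]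
        intro hmem
        obtain ⟨h1, h2, h3⟩ := (hTmem (s, u)).1 hmem
        exact hu ⟨h1, lt_trans h2 h3⟩
      rw [hfun, MeasureTheory.integral_zero]
  calc ∫ s in a..t, (t - s) ^ (α - 1) * ∫ u in a..s, φ u * G (s - u)
      = ∫ s in Ioo a t, (t - s) ^ (α - 1) * ∫ u in a..s, φ u * G (s - u) := by
        rw [intervalIntegral.integral_of_le hat.le, MeasureTheory.integral_Ioc_eq_integral_Ioo]
    _ = ∫ s, (Ioo a t).indicator
          (fun s => (t - s) ^ (α - 1) * ∫ u in a..s, φ u * G (s - u)) s := by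
        rw [MeasureTheory.integral_indicator measurableSet_Ioo]
    _ = ∫ s, ∫ u, H (s, u) := by simp_rw [h_inner1]
    _ = ∫ u, ∫ s, H (s, u) := hswap
    _ = ∫ u, (Ioo a t).indicator
          (fun u => φ u * ∫ s in u..t, (t - s) ^ (α - 1) * G (s - u)) u := by
        simp_rw [h_inner2]
    _ = ∫ u in Ioo a t, φ u * ∫ s in u..t, (t - s) ^ (α - 1) * G (s - u) := by
        rw [MeasureTheory.integral_indicator measurableSet_Ioo]
    _ = ∫ u in a..t, φ u * ∫ s in u..t, (t - s) ^ (α - 1) * G (s - u) := by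
        rw [intervalIntegral.integral_of_le hat.le, MeasureTheory.integral_Ioc_eq_integral_Ioo]

/-- The AB fractional integral of the AB fractional derivative recovers `f`
up to its initial value. -/
theorem abInt_abDeriv (α a b : ℝ) (hα0 : 0 < α) (hα1 : α < 1) (hab : a < b)
    (f : ℝ → ℝ) (hf : ContDiffOn ℝ 1 f (Icc a b)) :
    ∀ t ∈ Icc a b, abInt α a (abDeriv α a f) t = f t - f a := by
  have h1α : (0:ℝ) < 1 - α := by linarith
  have hΓα : 0 < Real.Gamma α := Real.Gamma_pos_of_pos hα0
  intro t ht
  rcases eq_or_lt_of_le ht.1 with rfl | hat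
  · simp [abInt, rlInt, abDeriv, intervalIntegral.integral_same]
  -- a < t ≤ b
  set G : ℝ → ℝ := fun r => mittagLeffler α 1 (-α * r ^ α / (1 - α)) with hGdef
  have hGc : Continuous G := by
    apply (continuous_ml hα0 hα1).comp
    apply Continuous.div_const
    exact continuous_const.mul (Real.continuous_rpow_const hα0.le)
  set g : ℝ → ℝ := derivWithin f (Icc a b) with hgdef
  have hgc : ContinuousOn g (Icc a b) :=
    hf.continuousOn_derivWithin (uniqueDiffOn_Icc hab) le_rfl
  set φ : ℝ → ℝ := fun x => g (max a (min x b)) with hφdef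
  have hclamp_mem : ∀ x : ℝ, max a (min x b) ∈ Icc a b := by
    intro x
    exact ⟨le_max_left _ _, max_le hab.le (min_le_right _ _)⟩
  have hφc : Continuous φ := by
    apply hgc.comp_continuous
      (continuous_const.max (continuous_id.min continuous_const)) hclamp_mem
  have hφg : ∀ x ∈ Icc a b, φ x = g x := by
    intro x hx
    simp only [hφdef]
    rw [min_eq_left hx.2, max_eq_right hx.1]
  have hφeq : ∀ x ∈ Ioo a b, φ x = deriv f x := by
    intro x hx
    rw [hφg x ⟨hx.1.le, hx.2.le⟩, hgdef, derivWithin_of_mem_nhds (Icc_mem_nhds hx.1 hx.2)]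
  have h_ae_b : ∀ᵐ x : ℝ, x ≠ b := by
    have h : {x : ℝ | ¬ x ≠ b} = {b} := by ext y; simp
    rw [ae_iff, h]
    exact measure_singleton b
  -- Step A: rewrite abDeriv with φ and G
  have hI1 : abDeriv α a f t = (1/(1-α)) * ∫ s in a..t, φ s * G (t - s) := by
    unfold abDeriv
    congr 1
    apply intervalIntegral.integral_congr_ae
    filter_upwards [h_ae_b] with x hxb hx
    rw [uIoc_of_le hat.le] at hx
    have hxI : x ∈ Ioo a b := ⟨hx.1, lt_of_le_of_ne (hx.2.trans ht.2) hxb⟩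
    rw [hφeq x hxI]
  have hI2 : ∀ s ∈ Ioc a t, abDeriv α a f s = (1/(1-α)) * ∫ u in a..s, φ u * G (s - u) := by
    intro s hs
    unfold abDeriv
    congr 1
    apply intervalIntegral.integral_congr_ae
    filter_upwards [h_ae_b] with u hub hu
    rw [uIoc_of_le hs.1.le] at hu
    have huI : u ∈ Ioo a b := ⟨hu.1, lt_of_le_of_ne ((hu.2.trans hs.2).trans ht.2) hub⟩
    rw [hφeq u huI]
  have hrl : rlInt α a (abDeriv α a f) t = (1 / Real.Gamma α) * ((1/(1-α)) *
      ∫ s in a..t, (t - s) ^ (α - 1) * ∫ u in a..s, φ u * G (s - u)) := by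
    unfold rlInt
    congr 1
    rw [← intervalIntegral.integral_const_mul]
    apply intervalIntegral.integral_congr_ae
    apply Filter.Eventually.of_forall
    intro s hs
    rw [uIoc_of_le hat.le] at hs
    rw [hI2 s hs]
    ring
  -- Fubini
  have hfub := fubini_tri hα0 hα1 hat φ G hφc hGc
  -- kernel identity
  have hker : ∀ u ∈ Ioo a t,
      (∫ s in u..t, (t - s) ^ (α - 1) * G (s - u)) =
        Real.Gamma α * (1 - α) / α * (1 - G (t - u)) := by
    intro u hu
    have hx : 0 < t - u := by linarith [hu.2]
    have hk := kernel_int hα0 hα1 hx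
    calc (∫ s in u..t, (t - s) ^ (α - 1) * G (s - u))
        = ∫ w in (0:ℝ)..(t - u), (t - (w + u)) ^ (α - 1) * G ((w + u) - u) := by
          rw [intervalIntegral.integral_comp_add_right (fun s => (t - s) ^ (α - 1) * G (s - u)) u]
          norm_num
      _ = ∫ w in (0:ℝ)..(t - u), ((t - u) - w) ^ (α - 1) *
            mittagLeffler α 1 (-α * w ^ α / (1 - α)) := by
          apply intervalIntegral.integral_congr
          intro w hw
          have e1 : t - (w + u) = (t - u) - w := by ring
          have e2 : w + u - u = w := by ring
          simp only [e1, e2]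
          rfl
      _ = Real.Gamma α * (1 - α) / α * (1 - G (t - u)) := hk
  -- assemble
  have hstep2 : (∫ u in a..t, φ u * ∫ s in u..t, (t - s) ^ (α - 1) * G (s - u))
      = (Real.Gamma α * (1 - α) / α) * ∫ u in a..t, φ u * (1 - G (t - u)) := by
    rw [← intervalIntegral.integral_const_mul]
    apply intervalIntegral.integral_congr_ae
    have h_ae_t : ∀ᵐ x : ℝ, x ≠ t := by
      have h : {x : ℝ | ¬ x ≠ t} = {t} := by ext y; simp
      rw [ae_iff, h]
      exact measure_singleton t
    filter_upwards [h_ae_t] with u hut hu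
    rw [uIoc_of_le hat.le] at hu
    have huI : u ∈ Ioo a t := ⟨hu.1, lt_of_le_of_ne hu.2 hut⟩
    rw [hker u huI]
    ring
  have hint1 : IntervalIntegrable (fun u => φ u * G (t - u)) volume a t := by
    apply Continuous.intervalIntegrable
    exact hφc.mul (hGc.comp (continuous_const.sub continuous_id))
  have hint2 : IntervalIntegrable (fun u => φ u * (1 - G (t - u))) volume a t := by
    apply Continuous.intervalIntegrable
    exact hφc.mul (continuous_const.sub (hGc.comp (continuous_const.sub continuous_id)))
  have hftc : (∫ u in a..t, φ u) = f t - f a := by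
    apply intervalIntegral.integral_eq_sub_of_hasDerivAt_of_le hat.le
      (hf.continuousOn.mono (Icc_subset_Icc le_rfl ht.2))
    · intro x hx
      have hxI : x ∈ Icc a b := ⟨hx.1.le, (hx.2.le.trans ht.2)⟩
      have hd : HasDerivWithinAt f (g x) (Icc a b) x :=
        ((hf.differentiableOn one_ne_zero) x hxI).hasDerivWithinAt
      have hx' : x ∈ Ioo a b := ⟨hx.1, lt_of_lt_of_le hx.2 ht.2⟩
      rw [hφg x hxI]
      exact hd.hasDerivAt (Icc_mem_nhds hx'.1 hx'.2)
    · exact hφc.intervalIntegrable _ _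
  calc abInt α a (abDeriv α a f) t
      = (1 - α) * abDeriv α a f t + α * rlInt α a (abDeriv α a f) t := rfl
    _ = (∫ u in a..t, φ u * G (t - u)) + (∫ u in a..t, φ u * (1 - G (t - u))) := by
        rw [hI1, hrl, hfub, hstep2]
        field_simp
    _ = ∫ u in a..t, (φ u * G (t - u) + φ u * (1 - G (t - u))) :=
        (intervalIntegral.integral_add hint1 hint2).symm
    _ = ∫ u in a..t, φ u := by
        apply intervalIntegral.integral_congr
        intro u hu
        ring
    _ = f t - f a := hftc
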